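/- Let S = (Xin, X0, {Xi}_{i∈I}, {Ti}_{i∈I}) be a CPDS over ℝ^d with I finite, and P a template basis. Consider the monotone map F♯ sending tuples w = (w_1, …, w_{|I|}, w_last) of functions P → EReal to the tuple with components F♯_i(w)(p) := (Ti '' ((w_last)⋆ ∩ Xi ∩ X0))†(p) for i ∈ I, and F♯_last(w)(p) := ((⋃_{i∈I} (w_i)⋆) ∪ Xin)†(p). Then the set of tuples w with F♯_i(w) ≤ w_i for all components (pointwise on P) has a least element W, the last component W_last of W is a feasible invariant bound with respect to S, and W_last ≤ v (pointwise) for every feasible invariant bound v with respect to S. -/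

import Mathlib

section

variable {d : ℕ} {ι : Type*}

/-- The `P`-support function `X†` of a set `X ⊆ ℝ^d`. -/
noncomputable def PSupport {d : ℕ} (P : Set ((Fin d → ℝ) → ℝ)) (X : Set (Fin d → ℝ)) :
    P → EReal :=
  fun p => ⨆ x ∈ X, ((p : (Fin d → ℝ) → ℝ) x : EReal)

/-- The `P`-sublevel set `w⋆` of a bound function `w : P → EReal`. -/
def PSublevel {d : ℕ} (P : Set ((Fin d → ℝ) → ℝ)) (w : P → EReal) :
    Set (Fin d → ℝ) :=
  {x | ∀ p : P, ((p : (Fin d → ℝ) → ℝ) x : EReal) ≤ w p}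

/-- `w : P → EReal` is a feasible invariant bound w.r.t. the CPDS. -/
def FeasibleBound (P : Set ((Fin d → ℝ) → ℝ)) (Xin X0 : Set (Fin d → ℝ))
    (X : ι → Set (Fin d → ℝ)) (T : ι → (Fin d → ℝ) → (Fin d → ℝ))
    (w : P → EReal) : Prop :=
  ∃ wi : ι → P → EReal,
    (∀ p : P, max (PSupport P Xin p) (⨆ i : ι, wi i p) ≤ w p) ∧
    ∀ (i : ι) (p : P),
      PSupport P (T i '' (PSublevel P w ∩ X i ∩ X0)) p ≤ wi i p

/-- The abstract semantics functional `F♯` on tuples `(w₁, …, w_{|I|}, w_last)`: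
the component `i ∈ I` of `F♯(w)` is `(Ti '' ((w_last)⋆ ∩ Xi ∩ X0))†`, and the last
component is `((⋃ i, (wᵢ)⋆) ∪ Xin)†`. -/
noncomputable def Fsharp (P : Set ((Fin d → ℝ) → ℝ)) (Xin X0 : Set (Fin d → ℝ))
    (X : ι → Set (Fin d → ℝ)) (T : ι → (Fin d → ℝ) → (Fin d → ℝ))
    (w : (ι → (P → EReal)) × (P → EReal)) :
    (ι → (P → EReal)) × (P → EReal) :=
  (fun i => PSupport P (T i '' (PSublevel P w.2 ∩ X i ∩ X0)),
    PSupport P ((⋃ i : ι, PSublevel P (w.1 i)) ∪ Xin))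


lemma psupport_mono {P : Set ((Fin d → ℝ) → ℝ)} {A B : Set (Fin d → ℝ)} (h : A ⊆ B) :
    PSupport P A ≤ PSupport P B := fun p =>
  iSup₂_le fun x hx => le_iSup₂_of_le x (h hx) le_rfl

lemma le_psupport {P : Set ((Fin d → ℝ) → ℝ)} {A : Set (Fin d → ℝ)} {x : Fin d → ℝ}
    (hx : x ∈ A) (p : P) : ((p : (Fin d → ℝ) → ℝ) x : EReal) ≤ PSupport P A p :=
  le_iSup₂_of_le x hx le_rfl

lemma psublevel_mono {P : Set ((Fin d → ℝ) → ℝ)} {w w' : P → EReal} (h : w ≤ w') :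
    PSublevel P w ⊆ PSublevel P w' := fun x hx p => (hx p).trans (h p)

/-- The set of tuples `w` with `F♯(w) ≤ w` (componentwise, pointwise on `P`)
has a least element `W`; the last component of `W` is a feasible invariant bound
w.r.t. the CPDS, and it is below every feasible invariant bound. -/
theorem abstract_semantics_least_fixpoint (d : ℕ) (ι : Type*) [Fintype ι]
    (P : Set ((Fin d → ℝ) → ℝ)) (Xin X0 : Set (Fin d → ℝ))
    (X : ι → Set (Fin d → ℝ)) (T : ι → (Fin d → ℝ) → (Fin d → ℝ)) :
    ∃ W : (ι → (P → EReal)) × (P → EReal),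
      Fsharp P Xin X0 X T W ≤ W ∧
      (∀ w' : (ι → (P → EReal)) × (P → EReal),
        Fsharp P Xin X0 X T w' ≤ w' → W ≤ w') ∧
      FeasibleBound P Xin X0 X T W.2 ∧
      ∀ v : P → EReal, FeasibleBound P Xin X0 X T v → W.2 ≤ v := by
  classical
  set F := Fsharp P Xin X0 X T with hFdef
  have hmono : Monotone F := by
    intro w w' hw
    constructor
    · intro i
      exact psupport_mono (Set.image_mono (Set.inter_subset_inter_left _
        (Set.inter_subset_inter_left _ (psublevel_mono hw.2))))
    · exact psupport_mono (Set.union_subset_union_left _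
        (Set.iUnion_mono fun i => psublevel_mono (hw.1 i)))
  set W : (ι → (P → EReal)) × (P → EReal) := sInf {w | F w ≤ w} with hWdef
  have hpre : F W ≤ W := le_sInf fun w hw => (hmono (sInf_le hw)).trans hw
  have hleast : ∀ w', F w' ≤ w' → W ≤ w' := fun w' hw' => sInf_le hw'
  refine ⟨W, hpre, hleast, ?_, ?_⟩
  · refine ⟨fun i => PSupport P (T i '' (PSublevel P W.2 ∩ X i ∩ X0)), fun p => ?_,
      fun i p => le_rfl⟩
    refine max_le ?_ (iSup_le fun i => ?_)
    · exact ((psupport_mono Set.subset_union_right p).trans (hpre.2 p))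
    · have himg : T i '' (PSublevel P W.2 ∩ X i ∩ X0) ⊆ PSublevel P (W.1 i) := by
        intro y hy q
        exact (le_psupport hy q).trans (hpre.1 i q)
      calc PSupport P (T i '' (PSublevel P W.2 ∩ X i ∩ X0)) p
          ≤ PSupport P ((⋃ j : ι, PSublevel P (W.1 j)) ∪ Xin) p :=
            psupport_mono (himg.trans ((Set.subset_iUnion (fun j => PSublevel P (W.1 j)) i).trans
              Set.subset_union_left)) p
        _ ≤ W.2 p := hpre.2 p
  · rintro v ⟨wi, h1, h2⟩
    have : W ≤ (wi, v) := by
      refine hleast _ ⟨fun i p => h2 i p, fun p => ?_⟩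
      refine iSup₂_le fun x hx => ?_
      rcases hx with hx | hx
      · obtain ⟨_, ⟨i, rfl⟩, hxi⟩ := hx
        exact (hxi p).trans ((le_iSup (fun j => wi j p) i).trans
          ((le_max_right _ _).trans (h1 p)))
      · exact (le_psupport hx p).trans ((le_max_left _ _).trans (h1 p))
    exact this.2


end
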